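/- Fix K ∈ ℕ, an index k ∈ Fin K, scalars a : Fin K → ℂ, and σ² > 0. Set J = (∑ i, |a i|²) + σ² and, for v ∈ ℂ, e(v) = (∑ i, |v·(a i)|²) + σ²·|v|² + 1 − 2·Re(v·(a k)). Then for all v ∈ ℂ and all α > 0, α·e(v) − log α ≥ 1 − log(1 + |a k|² / ((∑ i ≠ k, |a i|²) + σ²)), and equality holds at v = conj(a k)/J and α = J/(J − |a k|²). In particular, the infimum over v ∈ ℂ and α > 0 of α·e(v) − log α equals 1 − log(1 + SINR_k) with SINR_k = |a k|² / ((∑ i ≠ k, |a i|²) + σ²). -/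

import Mathlib

/-- Per-user core of Lemma 1: with `J = (∑ i, |a i|²) + σ²`,
`e(v) = (∑ i, |v a_i|²) + σ² |v|² + 1 - 2 Re(v a_k)`, and
`SINR = |a_k|² / ((∑_{i≠k} |a_i|²) + σ²)`, for all `v ∈ ℂ` and `α > 0`,
`α e(v) - log α ≥ 1 - log(1 + SINR)`, with equality at `v = conj(a_k)/J`,
`α = J/(J - |a_k|²)`; in particular the infimum over `(v, α)` equals `1 - log(1 + SINR)`. -/
theorem stmt_12 (K : ℕ) (k : Fin K) (a : Fin K → ℂ) (σ2 : ℝ) (hσ : 0 < σ2)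
    (J : ℝ) (hJ : J = (∑ i, ‖a i‖ ^ 2) + σ2)
    (e : ℂ → ℝ)
    (he : ∀ v : ℂ, e v = (∑ i, ‖v * a i‖ ^ 2) + σ2 * ‖v‖ ^ 2 + 1
        - 2 * (v * a k).re)
    (SINR : ℝ)
    (hSINR : SINR = ‖a k‖ ^ 2
        / ((∑ i ∈ Finset.univ.erase k, ‖a i‖ ^ 2) + σ2)) :
    (∀ v : ℂ, ∀ α : ℝ, 0 < α →
        α * e v - Real.log α ≥ 1 - Real.log (1 + SINR)) ∧
    ((J / (J - ‖a k‖ ^ 2)) * e ((starRingEnd ℂ) (a k) / (J : ℂ))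
        - Real.log (J / (J - ‖a k‖ ^ 2)) = 1 - Real.log (1 + SINR)) ∧
    IsGLB {y : ℝ | ∃ v : ℂ, ∃ α : ℝ, 0 < α ∧ y = α * e v - Real.log α}
      (1 - Real.log (1 + SINR)) := by
  set S : ℝ := ∑ i ∈ Finset.univ.erase k, ‖a i‖ ^ 2 with hSdef
  set A : ℝ := ‖a k‖ ^ 2 with hAdef
  have hS : 0 ≤ S := Finset.sum_nonneg (fun i _ => sq_nonneg _)
  have hA : 0 ≤ A := sq_nonneg _
  have hsplit : (∑ i, ‖a i‖ ^ 2) = S + A := by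
    rw [hSdef, hAdef]
    exact (Finset.sum_erase_add _ _ (Finset.mem_univ k)).symm
  have hD : 0 < S + σ2 := by linarith
  have hJS : J = S + A + σ2 := by rw [hJ, hsplit]
  have hJpos : 0 < J := by linarith
  have hJA : J - A = S + σ2 := by linarith
  have hAr : A = (a k).re ^ 2 + (a k).im ^ 2 := by
    rw [hAdef, Complex.sq_norm, Complex.normSq_apply]; ring
  -- e in closed form
  have heform : ∀ v : ℂ, e v =
      (v.re ^ 2 + v.im ^ 2) * J + 1 - 2 * (v.re * (a k).re - v.im * (a k).im) := by
    intro v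
    rw [he v]
    have h1 : (∑ i, ‖v * a i‖ ^ 2)
        = (v.re ^ 2 + v.im ^ 2) * (∑ i, ‖a i‖ ^ 2) := by
      rw [Finset.mul_sum]
      refine Finset.sum_congr rfl (fun i _ => ?_)
      rw [norm_mul, mul_pow, Complex.sq_norm v, Complex.normSq_apply]
      ring
    have h2 : ‖v‖ ^ 2 = v.re ^ 2 + v.im ^ 2 := by
      rw [Complex.sq_norm, Complex.normSq_apply]; ring
    rw [h1, h2, Complex.mul_re, hJ]
    ring
  -- lower bound on e
  have hemin : ∀ v : ℂ, (S + σ2) / J ≤ e v := by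
    intro v
    rw [heform v]
    rw [div_le_iff₀ hJpos] at *
    nlinarith [sq_nonneg (J * v.re - (a k).re), sq_nonneg (J * v.im + (a k).im), hJS]
  have hepos : ∀ v : ℂ, 0 < e v := fun v =>
    lt_of_lt_of_le (div_pos hD hJpos) (hemin v)
  -- value of e at the minimizer
  have hJ0 : J ≠ 0 := ne_of_gt hJpos
  have hwre : ((starRingEnd ℂ) (a k) / (J : ℂ)).re = (a k).re / J := by
    simp [Complex.div_re, Complex.normSq_apply]
    field_simp
  have hwim : ((starRingEnd ℂ) (a k) / (J : ℂ)).im = -(a k).im / J := by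
    simp [Complex.div_im, Complex.normSq_apply]
    field_simp
  have hew : e ((starRingEnd ℂ) (a k) / (J : ℂ)) = (S + σ2) / J := by
    rw [heform, hwre, hwim]
    have h1 : (S + σ2) / J = 1 - A / J := by
      field_simp
      linarith
    rw [h1, hAr]
    field_simp
    ring
  -- scalar inequality: α t - log α ≥ 1 + log t
  have hscal : ∀ t : ℝ, 0 < t → ∀ α : ℝ, 0 < α → 1 + Real.log t ≤ α * t - Real.log α := by
    intro t ht α hα
    have h := Real.log_le_sub_one_of_pos (mul_pos hα ht)
    rw [Real.log_mul (ne_of_gt hα) (ne_of_gt ht)] at h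
    linarith
  have hlogSINR : Real.log (1 + SINR) = Real.log J - Real.log (S + σ2) := by
    have h1 : 1 + SINR = J / (S + σ2) := by
      rw [hSINR]
      field_simp
      linarith
    rw [h1, Real.log_div (ne_of_gt hJpos) (ne_of_gt hD)]
  have hkey : 1 - Real.log (1 + SINR) = 1 + Real.log ((S + σ2) / J) := by
    rw [hlogSINR, Real.log_div (ne_of_gt hD) (ne_of_gt hJpos)]
    ring
  have part1 : ∀ v : ℂ, ∀ α : ℝ, 0 < α →
      α * e v - Real.log α ≥ 1 - Real.log (1 + SINR) := by
    intro v α hα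
    rw [hkey]
    calc 1 + Real.log ((S + σ2) / J) ≤ 1 + Real.log (e v) := by
          have := Real.log_le_log (div_pos hD hJpos) (hemin v)
          linarith
      _ ≤ α * e v - Real.log α := hscal _ (hepos v) α hα
  have hαpos : 0 < J / (J - A) := by rw [hJA]; exact div_pos hJpos hD
  have part2 : (J / (J - A)) * e ((starRingEnd ℂ) (a k) / (J : ℂ))
      - Real.log (J / (J - A)) = 1 - Real.log (1 + SINR) := by
    rw [hew, hJA, hlogSINR, Real.log_div (ne_of_gt hJpos) (ne_of_gt hD)]
    field_simp
  refine ⟨part1, part2, ?_, ?_⟩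
  · rintro y ⟨v, α, hα, rfl⟩
    exact part1 v α hα
  · intro b hb
    exact hb ⟨_, J / (J - A), hαpos, part2.symm⟩
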